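/- Let q be divisible by 4, let G = ⟨μ_1, μ_5⟩ acting on Z_q, and let j ≡ 1 (mod 4), 1 ≤ j < q/2. Then the orbits of G on the set of pairs {i, i+j} (i ∈ Z_q) are exactly three: { {i,i+j} : i ≡ 0 (mod 4) }, { {i,i+j} : i ≡ 2 (mod 4) }, and { {i,i+j} : i ≡ 1 or 3 (mod 4) }. -/

import Mathlib

/-- The reflection `μ_f : i ↦ f − i` of `ℤ/qℤ`. -/
def reflPerm (q : ℕ) (f : ZMod q) : Equiv.Perm (ZMod q) := Equiv.subLeft f

/-- The `j`-corner `{i, i+j}` in `ℤ/qℤ`, as an unordered pair. -/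
def corner (q j : ℕ) (i : ZMod q) : Sym2 (ZMod q) := s(i, i + (j : ZMod q))

/-- For `4 ∣ q`, `G = ⟨μ_1, μ_5⟩` and `j ≡ 1 (mod 4)` with `1 ≤ j < q/2`, the orbits of
`G` on the pairs `{i, i+j}` are exactly three: those with `i ≡ 0 (mod 4)`, those with
`i ≡ 2 (mod 4)`, and those with `i ≡ 1` or `3 (mod 4)`. -/
theorem three_orbits_on_corners (q j : ℕ) (hq0 : 0 < q) (hq : 4 ∣ q)
    (hj : j % 4 = 1) (hj1 : 1 ≤ j) (hj2 : j < q / 2) :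
    ∀ a b : ZMod q,
      (∃ g ∈ Subgroup.closure ({reflPerm q 1, reflPerm q 5} : Set (Equiv.Perm (ZMod q))),
          Sym2.map (⇑g) (corner q j a) = corner q j b) ↔
        ((a.val % 4 = 0 ∧ b.val % 4 = 0) ∨
          (a.val % 4 = 2 ∧ b.val % 4 = 2) ∨
          ((a.val % 4 = 1 ∨ a.val % 4 = 3) ∧ (b.val % 4 = 1 ∨ b.val % 4 = 3))) := by
  haveI : NeZero q := ⟨hq0.ne'⟩
  set S : Set (Equiv.Perm (ZMod q)) := {reflPerm q 1, reflPerm q 5} with hS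
  set H := Subgroup.closure S with hH
  set φ : ZMod q →+* ZMod 4 := ZMod.castHom hq (ZMod 4) with hφdef
  -- basic value lemma
  have hval : ∀ x : ZMod q, (φ x).val = x.val % 4 := by
    intro x
    have h1 : φ x = ((x.val : ℕ) : ZMod 4) := by
      simp [hφdef, ZMod.castHom_apply, ZMod.natCast_val]
    rw [h1, ZMod.val_natCast]
  have hvalinj : ∀ x y : ZMod q, x.val % 4 = y.val % 4 ↔ φ x = φ y := by
    intro x y
    rw [← hval, ← hval]
    constructor
    · intro h; exact ZMod.val_injective _ h
    · intro h; rw [h]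
  -- generator applications
  have hμ : ∀ (f i : ZMod q), reflPerm q f i = f - i := fun f i => rfl
  -- 2j ≠ 0
  have h2j : (j : ZMod q) + (j : ZMod q) ≠ 0 := by
    intro h
    have h' : ((2 * j : ℕ) : ZMod q) = 0 := by push_cast; rw [two_mul]; exact h
    have hd : q ∣ 2 * j := (ZMod.natCast_eq_zero_iff _ _).mp h'
    have h2q : 2 ∣ q := dvd_trans (by norm_num) hq
    have hlt : 2 * j < q := by omega
    have := Nat.le_of_dvd (by omega) hd
    omega
  -- φ of j is 1
  have hφj : ((j : ℕ) : ZMod 4) = 1 := by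
    conv_lhs => rw [← Nat.mod_add_div j 4, hj]
    push_cast
    rw [show ((4:ZMod 4)) = 0 by decide, zero_mul, add_zero]
  have hφjq : φ ((j : ℕ) : ZMod q) = 1 := by
    rw [map_natCast, hφj]
  -- translation powers
  have hτ : ∀ (k : ℕ) (i : ZMod q),
      ((reflPerm q 5 * reflPerm q 1) ^ k) i = ((4 * k : ℕ) : ZMod q) + i := by
    intro k
    induction k with
    | zero => intro i; simp
    | succ n ih =>
      intro i
      rw [pow_succ]
      have : ((reflPerm q 5 * reflPerm q 1) ^ n * (reflPerm q 5 * reflPerm q 1)) i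
          = ((reflPerm q 5 * reflPerm q 1) ^ n) ((reflPerm q 5 * reflPerm q 1) i) := rfl
      rw [this, ih]
      show ((4 * n : ℕ) : ZMod q) + (reflPerm q 5 (reflPerm q 1 i)) = _
      rw [hμ, hμ]
      push_cast
      ring
  have hτmem : ∀ k : ℕ, (reflPerm q 5 * reflPerm q 1) ^ k ∈ H := by
    intro k
    exact pow_mem (mul_mem (Subgroup.subset_closure (by simp [hS]))
      (Subgroup.subset_closure (by simp [hS]))) k
  -- from φ t = 0, get a translation in H
  have h4dvd : ∀ t : ZMod q, φ t = 0 → 4 ∣ t.val := by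
    intro t ht
    have : ((t.val : ℕ) : ZMod 4) = 0 := by
      rw [← ht]; simp [hφdef, ZMod.castHom_apply, ZMod.natCast_val]
    exact (ZMod.natCast_eq_zero_iff _ _).mp this
  have htrans : ∀ t : ZMod q, φ t = 0 → ∃ g ∈ H, ∀ i, g i = t + i := by
    intro t ht
    obtain ⟨k, hk⟩ := h4dvd t ht
    refine ⟨(reflPerm q 5 * reflPerm q 1) ^ k, hτmem k, fun i => ?_⟩
    rw [hτ k i, ← hk, ZMod.natCast_val, ZMod.cast_id]
  have hrefl : ∀ f : ZMod q, φ f = 1 → ∃ g ∈ H, ∀ i, g i = f - i := by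
    intro f hf
    have hf1 : φ (f - 1) = 0 := by rw [map_sub, hf, map_one, sub_self]
    obtain ⟨k, hk⟩ := h4dvd (f - 1) hf1
    refine ⟨(reflPerm q 5 * reflPerm q 1) ^ k * reflPerm q 1,
      mul_mem (hτmem k) (Subgroup.subset_closure (by simp [hS])), fun i => ?_⟩
    have : ((reflPerm q 5 * reflPerm q 1) ^ k * reflPerm q 1) i
        = ((reflPerm q 5 * reflPerm q 1) ^ k) (reflPerm q 1 i) := rfl
    rw [this, hτ, hμ, ← hk, ZMod.natCast_val, ZMod.cast_id]
    ring
  -- structure of closure elements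
  have hstruct : ∀ g ∈ H, ∃ t : ZMod q,
      (φ t = 0 ∧ ∀ i, g i = t + i) ∨ (φ t = 1 ∧ ∀ i, g i = t - i) := by
    intro g hg
    induction hg using Subgroup.closure_induction with
    | mem x hx =>
      rcases hx with h | h
      · exact ⟨1, Or.inr ⟨map_one φ, fun i => by rw [h, hμ]⟩⟩
      · refine ⟨5, Or.inr ⟨?_, fun i => by rw [h, hμ]⟩⟩
        have : (5 : ZMod q) = ((5 : ℕ) : ZMod q) := by push_cast; ring
        rw [this, map_natCast]; decide
    | one => exact ⟨0, Or.inl ⟨map_zero φ, fun i => by simp⟩⟩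
    | mul x y hx hy ihx ihy =>
      obtain ⟨t, ht⟩ := ihx
      obtain ⟨s, hs⟩ := ihy
      have hxy : ∀ i, (x * y) i = x (y i) := fun i => rfl
      rcases ht with ⟨ht0, htf⟩ | ⟨ht1, htf⟩ <;> rcases hs with ⟨hs0, hsf⟩ | ⟨hs1, hsf⟩
      · exact ⟨t + s, Or.inl ⟨by rw [map_add, ht0, hs0, add_zero],
          fun i => by rw [hxy, hsf, htf]; ring⟩⟩
      · exact ⟨t + s, Or.inr ⟨by rw [map_add, ht0, hs1, zero_add],
          fun i => by rw [hxy, hsf, htf]; ring⟩⟩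
      · exact ⟨t - s, Or.inr ⟨by rw [map_sub, ht1, hs0, sub_zero],
          fun i => by rw [hxy, hsf, htf]; ring⟩⟩
      · exact ⟨t - s, Or.inl ⟨by rw [map_sub, ht1, hs1, sub_self],
          fun i => by rw [hxy, hsf, htf]; ring⟩⟩
    | inv x hx ihx =>
      obtain ⟨t, ht⟩ := ihx
      rcases ht with ⟨ht0, htf⟩ | ⟨ht1, htf⟩
      · refine ⟨-t, Or.inl ⟨by rw [map_neg, ht0, neg_zero], fun i => ?_⟩⟩
        have : x (x⁻¹ i) = i := Equiv.apply_symm_apply x i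
        rw [htf] at this
        linear_combination this
      · refine ⟨t, Or.inr ⟨ht1, fun i => ?_⟩⟩
        have : x (x⁻¹ i) = i := Equiv.apply_symm_apply x i
        rw [htf] at this
        linear_combination -this
  -- main proof
  intro a b
  constructor
  · rintro ⟨g, hg, hmap⟩
    obtain ⟨t, ht⟩ := hstruct g hg
    have hdec : ∀ α β : ZMod 4, (β = α ∨ β = -α) →
        ((α.val = 0 ∧ β.val = 0) ∨ (α.val = 2 ∧ β.val = 2) ∨
          ((α.val = 1 ∨ α.val = 3) ∧ (β.val = 1 ∨ β.val = 3))) := by decide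
    have key : φ b = φ a ∨ φ b = -(φ a) := by
      rcases ht with ⟨ht0, htf⟩ | ⟨ht1, htf⟩
      · rw [corner, corner, Sym2.map_pair_eq, htf, htf, Sym2.eq_iff] at hmap
        rcases hmap with ⟨h1, _⟩ | ⟨h1, h2⟩
        · left; rw [← h1, map_add, ht0, zero_add]
        · exfalso
          apply h2j
          have : t + a = b + (j : ZMod q) := h1
          have h2' : t + (a + (j : ZMod q)) = b := h2
          linear_combination h2' - this
      · rw [corner, corner, Sym2.map_pair_eq, htf, htf, Sym2.eq_iff] at hmap
        rcases hmap with ⟨h1, h2⟩ | ⟨_, h2⟩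
        · exfalso
          apply h2j
          have h1' : t - a = b := h1
          have h2' : t - (a + (j : ZMod q)) = b + (j : ZMod q) := h2
          linear_combination h1' - h2'
        · right
          have h2' : t - (a + (j : ZMod q)) = b := h2
          rw [← h2', map_sub, map_add, ht1, hφjq]
          ring
    have := hdec (φ a) (φ b) key
    rw [hval a, hval b] at this
    exact this
  · intro hres
    have hresφ : ((φ a).val = 0 ∧ (φ b).val = 0) ∨ ((φ a).val = 2 ∧ (φ b).val = 2) ∨
        (((φ a).val = 1 ∨ (φ a).val = 3) ∧ ((φ b).val = 1 ∨ (φ b).val = 3)) := by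
      rw [hval a, hval b]; exact hres
    have key : φ b = φ a ∨ φ b = -(φ a) := by
      revert hresφ
      generalize φ a = α
      generalize φ b = β
      revert α β
      decide
    rcases key with hk | hk
    · have ht0 : φ (b - a) = 0 := by rw [map_sub, hk, sub_self]
      obtain ⟨g, hgH, hgf⟩ := htrans (b - a) ht0
      refine ⟨g, hgH, ?_⟩
      rw [corner, corner, Sym2.map_pair_eq, hgf, hgf]
      have e1 : b - a + a = b := by ring
      have e2 : b - a + (a + (j : ZMod q)) = b + (j : ZMod q) := by ring
      rw [e1, e2]
    · have hf1 : φ (a + b + (j : ZMod q)) = 1 := by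
        rw [map_add, map_add, hφjq, hk]; ring
      obtain ⟨g, hgH, hgf⟩ := hrefl (a + b + (j : ZMod q)) hf1
      refine ⟨g, hgH, ?_⟩
      rw [corner, corner, Sym2.map_pair_eq, hgf, hgf]
      have e1 : a + b + (j : ZMod q) - a = b + (j : ZMod q) := by ring
      have e2 : a + b + (j : ZMod q) - (a + (j : ZMod q)) = b := by ring
      rw [e1, e2]
      exact Sym2.eq_swap
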